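/- Let V be an n-dimensional vector space over the field F_2 of 2 elements with n ≥ 3. Then the location-domination number of Γ(V) equals n. -/

import Mathlib

/-- A set `L` is a locating-dominating set of `G` if for every two distinct
vertices `u, v ∉ L` we have `∅ ≠ N(u) ∩ L ≠ N(v) ∩ L ≠ ∅`. -/
def IsLocDom {α : Type*} (G : SimpleGraph α) (L : Set α) : Prop :=
  ∀ ⦃u v : α⦄, u ∉ L → v ∉ L → u ≠ v →
    G.neighborSet u ∩ L ≠ ∅ ∧
    G.neighborSet u ∩ L ≠ G.neighborSet v ∩ L ∧
    G.neighborSet v ∩ L ≠ ∅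

/-- A set `C` is an identifying code of `G` if `N[u] ∩ C ≠ N[v] ∩ C`
for all distinct vertices `u, v`. -/
def IsIdCode {α : Type*} (G : SimpleGraph α) (C : Set α) : Prop :=
  ∀ ⦃u v : α⦄, u ≠ v →
    insert u (G.neighborSet u) ∩ C ≠ insert v (G.neighborSet v) ∩ C

/-- The location-domination number: minimum cardinality of a locating-dominating set. -/
noncomputable def locDomNum {α : Type*} (G : SimpleGraph α) : ℕ :=
  sInf {k : ℕ | ∃ L : Set α, IsLocDom G L ∧ L.ncard = k}

/-- The identifying number: minimum cardinality of an identifying code. -/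
noncomputable def idNum {α : Type*} (G : SimpleGraph α) : ℕ :=
  sInf {k : ℕ | ∃ C : Set α, IsIdCode G C ∧ C.ncard = k}
/-- The non-zero component graph of a vector space `W` with respect to a fixed
basis `b`: vertices are the non-zero vectors, and two distinct vertices are
adjacent iff some basis vector has non-zero coefficient in both of their
representations. -/
def nzcGraph {F W : Type*} [Field F] [AddCommGroup W] [Module F W] {n : ℕ}
    (b : Module.Basis (Fin n) F W) : SimpleGraph {w : W // w ≠ 0} where
  Adj u v := u ≠ v ∧ ∃ i, b.repr u.1 i ≠ 0 ∧ b.repr v.1 i ≠ 0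
  symm := by
    constructor
    rintro u v ⟨h, i, hu, hv⟩
    exact ⟨h.symm, i, hv, hu⟩
  loopless := by
    constructor
    rintro u ⟨h, -⟩
    exact h rfl

/-- `Tset b i` is the class `Tᵢ` of non-zero vectors having exactly `i`
non-zero coefficients in their representation w.r.t. the basis `b`. -/
def Tset {F W : Type*} [Field F] [AddCommGroup W] [Module F W] {n : ℕ}
    (b : Module.Basis (Fin n) F W) (i : ℕ) : Set {w : W // w ≠ 0} :=
  {v | (b.repr v.1).support.card = i}

lemma F2_cases {F : Type*} [Field F] [Fintype F] (hq : Fintype.card F = 2) (x : F) :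
    x = 0 ∨ x = 1 := by
  classical
  by_contra h
  push_neg at h
  obtain ⟨h0, h1⟩ := h
  have hc : ({0, 1, x} : Finset F).card ≤ Fintype.card F := Finset.card_le_univ _
  rw [hq] at hc
  rw [Finset.card_insert_of_notMem (by simp [Ne.symm h0, (zero_ne_one (α := F))]),
      Finset.card_insert_of_notMem (by simp [Ne.symm h1])] at hc
  simp at hc

lemma n_lt_pow {n : ℕ} (hn : 3 ≤ n) : n < 2 ^ (n - 1) := by
  induction n with
  | zero => omega
  | succ m ih =>
    rcases Nat.lt_or_ge m 3 with h | h
    · interval_cases m <;> simp_all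
    · have := ih (by omega)
      have h3 : 2 ^ (m + 1 - 1) = 2 * 2 ^ (m - 1) := by
        rw [← pow_succ']
        congr 1
        omega
      omega

section NZC

variable {F W : Type*} [Field F] [AddCommGroup W] [Module F W] {n : ℕ}
  (b : Module.Basis (Fin n) F W)

/-- The basis vertex. -/
noncomputable def bV (i : Fin n) : {w : W // w ≠ 0} := ⟨b i, b.ne_zero i⟩

lemma adj_bV {u : {w : W // w ≠ 0}} {i : Fin n} (hu : u ≠ bV b i) :
    (nzcGraph b).Adj u (bV b i) ↔ b.repr u.1 i ≠ 0 := by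
  constructor
  · rintro ⟨-, j, hj1, hj2⟩
    have hji : j = i := by
      by_contra hji
      apply hj2
      simp [bV, Module.Basis.repr_self, Finsupp.single_apply, Ne.symm hji]
    rwa [hji] at hj1
  · intro h
    exact ⟨hu, i, h, by simp [bV, Module.Basis.repr_self]⟩

lemma locdom_basis [Fintype F] (hq : Fintype.card F = 2) :
    IsLocDom (nzcGraph b) (Set.range (bV b)) := by
  set L := Set.range (bV b) with hLdef
  have hmem_iff : ∀ (u : {w : W // w ≠ 0}), u ∉ L → ∀ i : Fin n,
      bV b i ∈ (nzcGraph b).neighborSet u ∩ L ↔ b.repr u.1 i ≠ 0 := by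
    intro u hu i
    have hne : u ≠ bV b i := fun h => hu ⟨i, h.symm⟩
    simp only [Set.mem_inter_iff, SimpleGraph.mem_neighborSet, adj_bV b hne,
      hLdef, Set.mem_range, and_iff_left_iff_imp]
    exact fun _ => ⟨i, rfl⟩
  have hNe : ∀ u ∉ L, (nzcGraph b).neighborSet u ∩ L ≠ ∅ := by
    intro u hu
    have hr : b.repr u.1 ≠ 0 := fun h => u.2 (by simpa using (b.repr.map_eq_zero_iff).1 h)
    obtain ⟨i, hi⟩ := Finsupp.ne_iff.1 hr
    simp only [Finsupp.coe_zero, Pi.zero_apply] at hi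
    exact Set.nonempty_iff_ne_empty.1 ⟨bV b i, (hmem_iff u hu i).2 hi⟩
  intro u v hu hv huv
  refine ⟨hNe u hu, ?_, hNe v hv⟩
  intro heq
  apply huv
  have hrepr : b.repr u.1 = b.repr v.1 := by
    ext i
    rcases F2_cases hq (b.repr u.1 i) with h | h <;>
      rcases F2_cases hq (b.repr v.1 i) with h' | h'
    · rw [h, h']
    · exfalso
      have hm : bV b i ∈ (nzcGraph b).neighborSet v ∩ L :=
        (hmem_iff v hv i).2 (by rw [h']; exact one_ne_zero)
      rw [← heq] at hm
      exact ((hmem_iff u hu i).1 hm) h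
    · exfalso
      have hm : bV b i ∈ (nzcGraph b).neighborSet u ∩ L :=
        (hmem_iff u hu i).2 (by rw [h]; exact one_ne_zero)
      rw [heq] at hm
      exact ((hmem_iff v hv i).1 hm) h'
    · rw [h, h']
  exact Subtype.ext (b.repr.injective hrepr)

end NZC

/-- For `n ≥ 3` over `F₂`, the location-domination number of `Γ(V)` equals `n`. -/
theorem stmt_11 {F W : Type*} [Field F] [Fintype F] (hq : Fintype.card F = 2)
    [AddCommGroup W] [Module F W] {n : ℕ} (hn : 3 ≤ n) (b : Module.Basis (Fin n) F W) :
    locDomNum (nzcGraph b) = n := by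
  classical
  haveI : Fintype W := Fintype.ofEquiv (Fin n → F) b.equivFun.symm.toEquiv
  have hcardW : Fintype.card W = 2 ^ n := by
    rw [Fintype.card_congr b.equivFun.toEquiv]
    simp [hq]
  have hcardα : Nat.card {w : W // w ≠ 0} = 2 ^ n - 1 := by
    rw [Nat.card_eq_fintype_card, Fintype.card_subtype_compl, hcardW,
      Fintype.card_subtype_eq (0 : W)]
  -- membership of n
  have hbinj : Function.Injective (bV b) :=
    fun i j h => b.injective (congrArg Subtype.val h)
  have hrange : (Set.range (bV b)).ncard = n := by
    rw [← Nat.card_coe_set_eq, Nat.card_range_of_injective hbinj,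
      Nat.card_eq_fintype_card, Fintype.card_fin]
  have hmem : n ∈ {k : ℕ | ∃ L : Set {w : W // w ≠ 0}, IsLocDom (nzcGraph b) L ∧ L.ncard = k} :=
    ⟨Set.range (bV b), locdom_basis b hq, hrange⟩
  -- lower bound
  have hlb : ∀ k ∈ {k : ℕ | ∃ L : Set {w : W // w ≠ 0},
      IsLocDom (nzcGraph b) L ∧ L.ncard = k}, n ≤ k := by
    rintro k ⟨L, hL, rfl⟩
    by_contra hk
    push_neg at hk
    set G := nzcGraph b with hG
    set f : {w : W // w ≠ 0} → Finset {w : W // w ≠ 0} :=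
      fun u => ((G.neighborSet u ∩ L).toFinite).toFinset with hf
    have hmaps : ∀ u ∈ (Lᶜ.toFinite).toFinset, f u ∈ (L.toFinite).toFinset.powerset := by
      intro u _
      rw [Finset.mem_powerset, Set.Finite.toFinset_subset_toFinset]
      exact Set.inter_subset_right
    have hinj : Set.InjOn f ((Lᶜ.toFinite).toFinset : Set {w : W // w ≠ 0}) := by
      intro u hu v hv heq
      rw [Set.Finite.coe_toFinset, Set.mem_compl_iff] at hu hv
      by_contra huv
      exact (hL hu hv huv).2.1 (Set.Finite.toFinset_inj.1 heq)
    have hcard1 : Lᶜ.ncard ≤ 2 ^ L.ncard := by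
      rw [Set.ncard_eq_toFinset_card _ (Lᶜ.toFinite), Set.ncard_eq_toFinset_card _ L.toFinite]
      calc (Lᶜ.toFinite).toFinset.card ≤ (L.toFinite).toFinset.powerset.card :=
            Finset.card_le_card_of_injOn f hmaps hinj
        _ = 2 ^ (L.toFinite).toFinset.card := Finset.card_powerset _
    have hadd : L.ncard + Lᶜ.ncard = 2 ^ n - 1 := by
      rw [Set.ncard_add_ncard_compl, hcardα]
    have hmono : (2 : ℕ) ^ L.ncard ≤ 2 ^ (n - 1) :=
      Nat.pow_le_pow_right (by norm_num) (by omega)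
    have hnp : n < 2 ^ (n - 1) := n_lt_pow hn
    have h2n : 2 ^ n = 2 * 2 ^ (n - 1) := by
      rw [← pow_succ']
      congr 1
      omega
    omega
  exact le_antisymm (Nat.sInf_le hmem) (le_csInf ⟨n, hmem⟩ hlb)
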